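/- Let T ∈ M_{m,n}(ℤ) and v ∈ ℤ^n. The group homomorphism from T^{-1}(ℤ^m)/ℤ^n to ℝ/ℤ given by ξ ↦ ⟨ξ, v⟩ + ℤ is identically zero if and only if v ∈ T^*(ℤ^m), i.e. v lies in the image of ℤ^m under the transpose of T. -/

import Mathlib

open Matrix

private lemma aux_char_eval {n : ℕ} (f : (Fin n → ℤ) →+ AddCircle (1 : ℚ))
    (q : Fin n → ℚ) (hq : ∀ i, ((q i : ℚ) : AddCircle (1 : ℚ)) = f (Pi.single i 1)) :
    ∀ x : Fin n → ℤ, f x = ((∑ i, (x i : ℚ) * q i : ℚ) : AddCircle (1 : ℚ)) := by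
  intro x
  have h1 : ∀ i : Fin n, Pi.single i (x i) = (x i • Pi.single i (1 : ℤ) : Fin n → ℤ) := by
    intro i; funext j; simp [Pi.single_apply, mul_ite]
  calc f x = f (∑ i, Pi.single i (x i)) := by rw [Finset.univ_sum_single]
    _ = ∑ i, f (Pi.single i (x i)) := map_sum f _ _
    _ = ∑ i, ((((x i : ℚ) * q i : ℚ)) : AddCircle (1 : ℚ)) := by
        refine Finset.sum_congr rfl fun i _ => ?_
        rw [h1 i, map_zsmul, ← hq i, ← AddCircle.coe_zsmul]
        rw [zsmul_eq_mul]
    _ = ((∑ i, (x i : ℚ) * q i : ℚ) : AddCircle (1 : ℚ)) := by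
        induction (Finset.univ : Finset (Fin n)) using Finset.induction with
        | empty => simp
        | @insert a s hmem ih =>
            rw [Finset.sum_insert hmem, Finset.sum_insert hmem, AddCircle.coe_add, ih]

theorem pairing_vanishes_iff_mem_transpose_image {m n : ℕ}
    (T : Matrix (Fin m) (Fin n) ℤ) (v : Fin n → ℤ) :
    (∀ ξ : Fin n → ℝ, (∀ i, ∃ k : ℤ, (T.map ((↑) : ℤ → ℝ)).mulVec ξ i = (k : ℝ)) →
        ∃ k : ℤ, (∑ i, ξ i * (v i : ℝ)) = (k : ℝ)) ↔
      ∃ w : Fin m → ℤ, T.transpose.mulVec w = v := by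
  constructor
  · intro h
    by_contra hv
    -- the submodule Tᵀ(ℤ^m)
    set L : Submodule ℤ (Fin n → ℤ) := LinearMap.range (Matrix.mulVecLin T.transpose) with hL
    have hvL : v ∉ L := by
      intro hmem
      obtain ⟨w, hw⟩ := hmem
      exact hv ⟨w, hw⟩
    have hvQ : (Submodule.Quotient.mk v : (Fin n → ℤ) ⧸ L) ≠ 0 := by
      simpa [Submodule.Quotient.mk_eq_zero] using hvL
    obtain ⟨c, hc⟩ := CharacterModule.exists_character_apply_ne_zero_of_ne_zero hvQ
    set f : (Fin n → ℤ) →+ AddCircle (1 : ℚ) :=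
      (c : ((Fin n → ℤ) ⧸ L) →+ AddCircle (1:ℚ)).comp L.mkQ.toAddMonoidHom with hf
    have hq : ∀ i : Fin n, ∃ q : ℚ, ((q : ℚ) : AddCircle (1 : ℚ)) = f (Pi.single i 1) := by
      intro i
      obtain ⟨q, hq⟩ := QuotientAddGroup.mk'_surjective
        (AddSubgroup.zmultiples (1:ℚ)) (f (Pi.single i 1))
      exact ⟨q, hq⟩
    choose q hq using hq
    have key := aux_char_eval f q hq
    -- zero test on AddCircle
    have hzero : ∀ r : ℚ, ((r : ℚ) : AddCircle (1 : ℚ)) = 0 ↔ ∃ k : ℤ, r = (k : ℚ) := by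
      intro r
      rw [AddCircle.coe_eq_zero_iff]
      constructor
      · rintro ⟨k, hk⟩; exact ⟨k, by simpa using hk.symm⟩
      · rintro ⟨k, hk⟩; exact ⟨k, by simpa using hk.symm⟩
    set ξ : Fin n → ℝ := fun i => ((q i : ℚ) : ℝ) with hξ
    have hprem : ∀ i, ∃ k : ℤ, (T.map ((↑) : ℤ → ℝ)).mulVec ξ i = (k : ℝ) := by
      intro j
      have hx : T.transpose.mulVec (Pi.single j 1) ∈ L := ⟨Pi.single j 1, rfl⟩
      have hfx : f (T.transpose.mulVec (Pi.single j 1)) = 0 := by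
        simp only [hf, AddMonoidHom.comp_apply, LinearMap.toAddMonoidHom_coe]
        change c (L.mkQ (T.transpose.mulVec (Pi.single j 1))) = 0
        rw [show L.mkQ (T.transpose.mulVec (Pi.single j 1)) = 0 from
          (Submodule.Quotient.mk_eq_zero L).2 hx]
        exact map_zero _
      rw [key, hzero] at hfx
      obtain ⟨k, hk⟩ := hfx
      refine ⟨k, ?_⟩
      have hxi : ∀ i, T.transpose.mulVec (Pi.single j 1) i = T j i := by
        intro i
        simp [Matrix.mulVec, dotProduct, Pi.single_apply]
      rw [funext hxi] at hk
      have : ((∑ i, (T j i : ℚ) * q i : ℚ) : ℝ) = ((k : ℚ) : ℝ) := by rw [hk]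
      push_cast at this
      simpa [Matrix.mulVec, dotProduct, Matrix.map_apply, hξ] using this
    obtain ⟨k, hk⟩ := h ξ hprem
    -- but f v ≠ 0
    have hfv : f v ≠ 0 := by
      exact hc
    rw [key] at hfv
    apply hfv
    refine (hzero _).2 ⟨k, ?_⟩
    have : ((∑ i, (v i : ℚ) * q i : ℚ) : ℝ) = ((k : ℚ) : ℝ) := by
      push_cast
      rw [← hk]
      exact Finset.sum_congr rfl fun i _ => by rw [mul_comm]
    exact_mod_cast this
  · rintro ⟨w, hw⟩ ξ hξ
    choose k hk using hξ
    refine ⟨∑ j, k j * w j, ?_⟩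
    have hv : ∀ i, (v i : ℝ) = ∑ j, (T j i : ℝ) * (w j : ℝ) := by
      intro i
      rw [← hw]
      simp [Matrix.mulVec, dotProduct]
    calc (∑ i, ξ i * (v i : ℝ)) = ∑ i, ∑ j, ξ i * ((T j i : ℝ) * (w j : ℝ)) := by
          refine Finset.sum_congr rfl fun i _ => ?_
          rw [hv i, Finset.mul_sum]
      _ = ∑ j, (∑ i, (T j i : ℝ) * ξ i) * (w j : ℝ) := by
          rw [Finset.sum_comm]
          refine Finset.sum_congr rfl fun j _ => ?_
          rw [Finset.sum_mul]
          exact Finset.sum_congr rfl fun i _ => by ring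
      _ = ∑ j, (k j : ℝ) * (w j : ℝ) := by
          refine Finset.sum_congr rfl fun j _ => ?_
          have := hk j
          simp only [Matrix.mulVec, dotProduct, Matrix.map_apply] at this
          rw [this]
      _ = ((∑ j, k j * w j : ℤ) : ℝ) := by push_cast; rfl
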